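/- Let L(b) = γ‖b_{T^c}‖₁ + (1/2)‖y − Ab‖₂² + (λ/2)‖b_T − μ̂_T‖₂². Suppose Q_{T,λ}(Δ) is invertible, ERC_{T,λ}(Δ) = 1 − max_{ω ∉ T∪Δ} ‖P(Δ)A_Δ' M A_ω‖₁ > 0, and γ ≥ ‖A_{(T∪Δ)^c}'(y − A c(Δ))‖_∞ / ERC_{T,λ}(Δ). Then L has a unique global minimizer over all of ℝᵐ, and this minimizer equals d(Δ), the minimizer of L over vectors supported on T∪Δ; in particular the global minimizer is supported on T∪Δ. -/

import Mathlib

open Matrix BigOperators Finset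

noncomputable section

abbrev Idx {m : ℕ} (T : Finset (Fin m)) := {j : Fin m // j ∈ T}

/-- Submatrix of `A` consisting of the columns indexed by `T`. -/
def colsub {n m : ℕ} (A : Matrix (Fin n) (Fin m) ℝ) (T : Finset (Fin m)) :
    Matrix (Fin n) (Idx T) ℝ := Matrix.of fun i j => A i j.1

/-- Euclidean (ℓ2) norm of a finitely indexed vector. -/
def l2 {α : Type*} [Fintype α] (v : α → ℝ) : ℝ := Real.sqrt (∑ i, v i ^ 2)

/-- ℓ1 norm. -/
def l1 {α : Type*} [Fintype α] (v : α → ℝ) : ℝ := ∑ i, |v i|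

/-- ℓ∞ (sup) norm. -/
def linf {α : Type*} [Fintype α] (v : α → ℝ) : ℝ := ⨆ i, |v i|

/-- Spectral (ℓ2 operator) norm of a matrix. -/
def spec {α β : Type*} [Fintype α] [Fintype β] [DecidableEq β] (M : Matrix α β ℝ) : ℝ :=
  ‖LinearMap.toContinuousLinearMap (Matrix.toEuclideanLin M)‖

/-- `Q_{T,λ}(S) = A_{T∪S}' A_{T∪S} + λ·diag(I_T, 0_S)`. -/
def Qmat {n m : ℕ} (A : Matrix (Fin n) (Fin m) ℝ) (T S : Finset (Fin m)) (lam : ℝ) :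
    Matrix (Idx (T ∪ S)) (Idx (T ∪ S)) ℝ :=
  (colsub A (T ∪ S))ᵀ * colsub A (T ∪ S) +
    lam • (Matrix.of (fun i j => if i = j ∧ (i : Fin m) ∈ T then (1 : ℝ) else 0) :
      Matrix (Idx (T ∪ S)) (Idx (T ∪ S)) ℝ)

/-- `M_{T,λ} = I − A_T (A_T'A_T + λ I_T)⁻¹ A_T'`. -/
def Mmat {n m : ℕ} (A : Matrix (Fin n) (Fin m) ℝ) (T : Finset (Fin m)) (lam : ℝ) :
    Matrix (Fin n) (Fin n) ℝ :=
  1 - colsub A T * ((colsub A T)ᵀ * colsub A T + lam • 1)⁻¹ * (colsub A T)ᵀ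

/-- `P_{T,λ}(Δ) = (A_Δ' M A_Δ)⁻¹`. -/
def Pmat {n m : ℕ} (A : Matrix (Fin n) (Fin m) ℝ) (T Δ : Finset (Fin m)) (lam : ℝ) :
    Matrix (Idx Δ) (Idx Δ) ℝ :=
  ((colsub A Δ)ᵀ * Mmat A T lam * colsub A Δ)⁻¹

/-- The regularized least-squares estimate supported on `T ∪ S`:
`c_{T∪S} = Q⁻¹ (A_{T∪S}' y + [λμ̂_T ; 0_S])`, zero outside `T ∪ S`. -/
def cvec {n m : ℕ} (A : Matrix (Fin n) (Fin m) ℝ) (T S : Finset (Fin m)) (lam : ℝ)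
    (y : Fin n → ℝ) (μ : Fin m → ℝ) : Fin m → ℝ :=
  fun i => if h : i ∈ T ∪ S then
    (Qmat A T S lam)⁻¹.mulVec
      (fun j => (∑ k, A k j.1 * y k) + (if (j : Fin m) ∈ T then lam * μ j.1 else 0)) ⟨i, h⟩
  else 0

/-- The reg-mod-BPDN objective
`L(b) = γ‖b_{T^c}‖₁ + (1/2)‖y − Ab‖₂² + (λ/2)‖b_T − μ̂_T‖₂²`. -/
def Lobj {n m : ℕ} (A : Matrix (Fin n) (Fin m) ℝ) (T : Finset (Fin m)) (γ lam : ℝ)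
    (y : Fin n → ℝ) (μ : Fin m → ℝ) (b : Fin m → ℝ) : ℝ :=
  γ * (∑ i ∈ Tᶜ, |b i|) + (1/2) * (∑ i, (y i - A.mulVec b i) ^ 2) +
    (lam/2) * (∑ i ∈ T, (b i - μ i) ^ 2)

/-- The quadratic part `L₁(b) = (1/2)‖y − Ab‖₂² + (λ/2)‖b_T − μ̂_T‖₂²`. -/
def L1obj {n m : ℕ} (A : Matrix (Fin n) (Fin m) ℝ) (T : Finset (Fin m)) (lam : ℝ)
    (y : Fin n → ℝ) (μ : Fin m → ℝ) (b : Fin m → ℝ) : ℝ :=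
  (1/2) * (∑ i, (y i - A.mulVec b i) ^ 2) + (lam/2) * (∑ i ∈ T, (b i - μ i) ^ 2)

/-- `ERC_{T,λ}(Δ) = 1 − max_{ω∉T∪Δ} ‖P(Δ) A_Δ' M A_ω‖₁`. -/
def ERC {n m : ℕ} (A : Matrix (Fin n) (Fin m) ℝ) (T Δ : Finset (Fin m)) (lam : ℝ) : ℝ :=
  1 - ⨆ ω : Idx ((T ∪ Δ)ᶜ),
    l1 ((Pmat A T Δ lam * (colsub A Δ)ᵀ * Mmat A T lam).mulVec (fun i => A i ω.1))

/-- `f₁(Δ)`. -/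
def f1 {n m : ℕ} (A : Matrix (Fin n) (Fin m) ℝ) (T Δ : Finset (Fin m)) (lam : ℝ) : ℝ :=
  Real.sqrt
    (spec (((colsub A T)ᵀ * colsub A T + lam • 1)⁻¹ * (colsub A T)ᵀ * colsub A Δ *
        Pmat A T Δ lam) ^ 2 + spec (Pmat A T Δ lam) ^ 2)

/-- `f₂(Δ) = ‖Q⁻¹‖₂`. -/
def f2 {n m : ℕ} (A : Matrix (Fin n) (Fin m) ℝ) (T Δ : Finset (Fin m)) (lam : ℝ) : ℝ :=
  spec ((Qmat A T Δ lam)⁻¹)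

/-- `f₃(Δ) = ‖Q⁻¹ A_{T∪Δ}'‖₂`. -/
def f3 {n m : ℕ} (A : Matrix (Fin n) (Fin m) ℝ) (T Δ : Finset (Fin m)) (lam : ℝ) : ℝ :=
  spec ((Qmat A T Δ lam)⁻¹ * (colsub A (T ∪ Δ))ᵀ)

/-- `f₄(Δ̃) = sqrt(‖Q(Δ̃)⁻¹ A_{T∪Δ̃}' A_{Δ∖Δ̃}‖₂² + 1)`. -/
def f4 {n m : ℕ} (A : Matrix (Fin n) (Fin m) ℝ) (T Δ Δt : Finset (Fin m)) (lam : ℝ) : ℝ :=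
  Real.sqrt
    (spec ((Qmat A T Δt lam)⁻¹ * (colsub A (T ∪ Δt))ᵀ * colsub A (Δ \ Δt)) ^ 2 + 1)

/-- Numerator of `γ*`: `‖A_{(T∪Δ)^c}'(y − A c(Δ))‖_∞`. -/
def gammaNum {n m : ℕ} (A : Matrix (Fin n) (Fin m) ℝ) (T Δ : Finset (Fin m)) (lam : ℝ)
    (y : Fin n → ℝ) (μ : Fin m → ℝ) : ℝ :=
  linf (fun j : Idx ((T ∪ Δ)ᶜ) =>
    ∑ i, A i j.1 * (y i - A.mulVec (cvec A T Δ lam y μ) i))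

/-- `γ*_{T,λ}(Δ)`. -/
def gammaStar {n m : ℕ} (A : Matrix (Fin n) (Fin m) ℝ) (T Δ : Finset (Fin m)) (lam : ℝ)
    (y : Fin n → ℝ) (μ : Fin m → ℝ) : ℝ :=
  gammaNum A T Δ lam y μ / ERC A T Δ lam




lemma aux_quad_local (C w a : ℝ) (hC : 0 ≤ C) (ha : 0 < a)
    (h : ∀ t : ℝ, |t| ≤ a → 0 ≤ w * t + C * t ^ 2) : w = 0 := by
  by_contra hw
  have hw' : 0 < |w| := abs_pos.mpr hw
  set τ : ℝ := min a (|w| / (2 * C + 1)) with hτ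
  have hτpos : 0 < τ := lt_min ha (by positivity)
  have hτa : τ ≤ a := min_le_left _ _
  have hτb : τ ≤ |w| / (2 * C + 1) := min_le_right _ _
  have ht := h (-(w / |w|) * τ) (by
    rw [abs_mul, abs_neg, abs_div, abs_abs, div_self (ne_of_gt hw'), one_mul, abs_of_pos hτpos]
    exact hτa)
  have hww : w * (-(w / |w|) * τ) = -(|w| * τ) := by
    field_simp
    nlinarith [abs_mul_abs_self w]
  rw [hww] at ht
  have hsq : C * (-(w / |w|) * τ) ^ 2 = C * τ ^ 2 := by
    rw [mul_pow, neg_pow, div_pow]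
    rw [sq_abs, div_self (by positivity : w ^ 2 ≠ 0)]
    ring
  rw [hsq] at ht
  -- 0 ≤ -(|w| τ) + C τ² , so |w| ≤ C τ ≤ C |w|/(2C+1) < |w|
  have h1 : |w| ≤ C * τ := by nlinarith
  have h2 : C * τ ≤ C * (|w| / (2 * C + 1)) := by nlinarith
  have : C * (|w| / (2 * C + 1)) < |w| := by
    rw [div_eq_mul_inv]
    have : (2 * C + 1)⁻¹ * (2 * C + 1) = 1 := inv_mul_cancel₀ (by positivity)
    nlinarith [mul_pos hw' (by positivity : (0:ℝ) < (2*C+1)⁻¹)]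
  linarith

lemma aux_quad (C w : ℝ) (hC : 0 ≤ C) (h : ∀ t : ℝ, 0 ≤ w * t + C * t ^ 2) : w = 0 :=
  aux_quad_local C w 1 hC one_pos (fun t _ => h t)

lemma aux_quad_abs (C γ u : ℝ) (hC : 0 ≤ C) (hγ : 0 < γ)
    (h : ∀ t : ℝ, 0 ≤ γ * |t| - u * t + C * t ^ 2) : |u| ≤ γ := by
  by_contra hle
  push_neg at hle
  have hu : 0 < |u| := lt_trans hγ hle
  have hu0 : u ≠ 0 := abs_pos.mp hu
  set τ : ℝ := (|u| - γ) / (2 * C + 1) with hτ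
  have hτpos : 0 < τ := by apply div_pos <;> nlinarith
  have ht := h (u / |u| * τ)
  have habs : |u / |u| * τ| = τ := by
    rw [abs_mul, abs_div, abs_abs, div_self (ne_of_gt hu), one_mul, abs_of_pos hτpos]
  have huu : u * (u / |u| * τ) = |u| * τ := by
    field_simp
    nlinarith [abs_mul_abs_self u]
  rw [habs, huu] at ht
  have hsq : C * (u / |u| * τ) ^ 2 = C * τ ^ 2 := by
    rw [mul_pow, div_pow, sq_abs, div_self (by positivity : u ^ 2 ≠ 0)]; ring
  rw [hsq] at ht
  have h1 : |u| - γ ≤ C * τ := by nlinarith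
  have h2 : C * τ ≤ C * ((|u| - γ) / (2*C+1)) := le_of_eq rfl
  have h3 : C * ((|u| - γ) / (2*C+1)) < |u| - γ := by
    rw [div_eq_mul_inv]
    have hinv : (2 * C + 1)⁻¹ * (2 * C + 1) = 1 := inv_mul_cancel₀ (by positivity)
    nlinarith [mul_pos (by linarith : (0:ℝ) < |u| - γ) (by positivity : (0:ℝ) < (2*C+1)⁻¹)]
  linarith

lemma lobj_expand {n m : ℕ} (A : Matrix (Fin n) (Fin m) ℝ) (T : Finset (Fin m)) (γ lam : ℝ)
    (y : Fin n → ℝ) (μ : Fin m → ℝ) (d b : Fin m → ℝ) :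
    Lobj A T γ lam y μ b = Lobj A T γ lam y μ d
      + γ * ∑ i ∈ Tᶜ, (|b i| - |d i|)
      - ∑ i, (b i - d i) * (∑ k, A k i * (y k - A.mulVec d k))
      + lam * ∑ i ∈ T, (d i - μ i) * (b i - d i)
      + (1/2) * ∑ k, (A.mulVec (fun j => b j - d j) k) ^ 2
      + (lam/2) * ∑ i ∈ T, (b i - d i) ^ 2 := by
  have hb : ∀ k, A.mulVec b k = A.mulVec d k + A.mulVec (fun j => b j - d j) k := by
    intro k
    simp only [Matrix.mulVec, dotProduct, ← Finset.sum_add_distrib]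
    exact Finset.sum_congr rfl fun j _ => by ring
  have hswap : ∑ k, (y k - A.mulVec d k) * A.mulVec (fun j => b j - d j) k
      = ∑ i, (b i - d i) * (∑ k, A k i * (y k - A.mulVec d k)) := by
    simp only [Matrix.mulVec, dotProduct, Finset.mul_sum]
    rw [Finset.sum_comm]
    exact Finset.sum_congr rfl fun i _ => Finset.sum_congr rfl fun k _ => by ring
  have hsq : ∑ k, (y k - A.mulVec b k) ^ 2
      = ∑ k, (y k - A.mulVec d k) ^ 2
        - 2 * ∑ i, (b i - d i) * (∑ k, A k i * (y k - A.mulVec d k))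
        + ∑ k, (A.mulVec (fun j => b j - d j) k) ^ 2 := by
    rw [← hswap, Finset.mul_sum, ← Finset.sum_sub_distrib, ← Finset.sum_add_distrib]
    exact Finset.sum_congr rfl fun k _ => by rw [hb k]; ring
  have hTsum : ∑ i ∈ T, (b i - μ i) ^ 2
      = ∑ i ∈ T, (d i - μ i) ^ 2 + 2 * ∑ i ∈ T, (d i - μ i) * (b i - d i)
        + ∑ i ∈ T, (b i - d i) ^ 2 := by
    rw [Finset.mul_sum, ← Finset.sum_add_distrib, ← Finset.sum_add_distrib]
    exact Finset.sum_congr rfl fun i _ => by ring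
  have hl1 : ∑ i ∈ Tᶜ, |b i| = ∑ i ∈ Tᶜ, |d i| + ∑ i ∈ Tᶜ, (|b i| - |d i|) := by
    rw [← Finset.sum_add_distrib]
    exact Finset.sum_congr rfl fun i _ => by ring
  simp only [Lobj]
  rw [hsq, hTsum, hl1]
  ring

lemma lobj_perturb {n m : ℕ} (A : Matrix (Fin n) (Fin m) ℝ) (T : Finset (Fin m)) (γ lam : ℝ)
    (y : Fin n → ℝ) (μ : Fin m → ℝ) (d : Fin m → ℝ) (i : Fin m) (t : ℝ) :
    Lobj A T γ lam y μ (fun j => if j = i then d i + t else d j) - Lobj A T γ lam y μ d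
    = γ * (if i ∈ T then 0 else |d i + t| - |d i|)
      - t * (∑ k, A k i * (y k - A.mulVec d k))
      + (if i ∈ T then lam * ((d i - μ i) * t) + (lam/2) * t ^ 2 else 0)
      + (1/2) * (∑ k, (A k i) ^ 2) * t ^ 2 := by
  set b : Fin m → ℝ := fun j => if j = i then d i + t else d j with hbdef
  have hbd : ∀ j, b j - d j = if i = j then t else 0 := by
    intro j
    by_cases h : j = i
    · subst h; simp [hbdef]
    · rw [if_neg (fun hh : i = j => h hh.symm)]; simp [hbdef, h]
  have p2 : ∑ j, (b j - d j) * (∑ k, A k j * (y k - A.mulVec d k))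
      = t * (∑ k, A k i * (y k - A.mulVec d k)) := by
    have : ∀ j, (b j - d j) * (∑ k, A k j * (y k - A.mulVec d k))
        = if i = j then t * (∑ k, A k j * (y k - A.mulVec d k)) else 0 := by
      intro j; rw [hbd j]; by_cases h : i = j <;> simp [h]
    simp only [this]
    rw [Finset.sum_ite_eq Finset.univ i]
    simp
  have p3 : ∀ k, A.mulVec (fun j => b j - d j) k = A k i * t := by
    intro k
    simp only [Matrix.mulVec, dotProduct]
    have : ∀ j, A k j * (b j - d j) = if i = j then A k j * t else 0 := by
      intro j; rw [hbd j]; by_cases h : i = j <;> simp [h]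
    simp only [this]
    rw [Finset.sum_ite_eq Finset.univ i]
    simp
  have p3' : ∑ k, (A.mulVec (fun j => b j - d j) k) ^ 2 = (∑ k, (A k i) ^ 2) * t ^ 2 := by
    rw [Finset.sum_mul]
    exact Finset.sum_congr rfl fun k _ => by rw [p3 k]; ring
  have p1 : ∑ j ∈ Tᶜ, (|b j| - |d j|) = if i ∈ T then 0 else |d i + t| - |d i| := by
    have : ∀ j, (|b j| - |d j|) = if i = j then |d i + t| - |d i| else 0 := by
      intro j
      by_cases h : j = i
      · subst h; simp [hbdef]
      · rw [if_neg (fun hh : i = j => h hh.symm)]; simp [hbdef, h]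
    simp only [this]
    rw [Finset.sum_ite_eq Tᶜ i]
    by_cases h : i ∈ T <;> simp [h]
  have p4 : ∑ j ∈ T, (d j - μ j) * (b j - d j) = if i ∈ T then (d i - μ i) * t else 0 := by
    have : ∀ j, (d j - μ j) * (b j - d j) = if i = j then (d j - μ j) * t else 0 := by
      intro j; rw [hbd j]; by_cases h : i = j <;> simp [h]
    simp only [this]
    rw [Finset.sum_ite_eq T i]
  have p5 : ∑ j ∈ T, (b j - d j) ^ 2 = if i ∈ T then t ^ 2 else 0 := by
    have : ∀ j, (b j - d j) ^ 2 = if i = j then t ^ 2 else 0 := by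
      intro j; rw [hbd j]; by_cases h : i = j <;> simp [h]
    simp only [this]
    rw [Finset.sum_ite_eq T i]
  rw [lobj_expand A T γ lam y μ d b, p1, p2, p4, p5, p3']
  by_cases h : i ∈ T <;> simp [h] <;> ring

section Stat
variable {n m : ℕ} (A : Matrix (Fin n) (Fin m) ℝ) (T Δ : Finset (Fin m))
  (γ lam : ℝ) (y : Fin n → ℝ) (μ : Fin m → ℝ) (d : Fin m → ℝ)

lemma stat_perturb_nonneg (hγ : 0 < γ)
    (hd0 : ∀ i ∉ T ∪ Δ, d i = 0)
    (hdmin : ∀ b : Fin m → ℝ, (∀ i ∉ T ∪ Δ, b i = 0) →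
      Lobj A T γ lam y μ d ≤ Lobj A T γ lam y μ b)
    {i : Fin m} (hi : i ∈ T ∪ Δ) (t : ℝ) :
    0 ≤ γ * (if i ∈ T then 0 else |d i + t| - |d i|)
      - t * (∑ k, A k i * (y k - A.mulVec d k))
      + (if i ∈ T then lam * ((d i - μ i) * t) + (lam/2) * t ^ 2 else 0)
      + (1/2) * (∑ k, (A k i) ^ 2) * t ^ 2 := by
  rw [← lobj_perturb A T γ lam y μ d i t]
  have hsupp : ∀ j ∉ T ∪ Δ, (fun j => if j = i then d i + t else d j) j = 0 := by
    intro j hj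
    have : j ≠ i := fun h => hj (h ▸ hi)
    simp [this, hd0 j hj]
  linarith [hdmin _ hsupp]

lemma stat_T (hγ : 0 < γ) (hlam : 0 ≤ lam)
    (hd0 : ∀ i ∉ T ∪ Δ, d i = 0)
    (hdmin : ∀ b : Fin m → ℝ, (∀ i ∉ T ∪ Δ, b i = 0) →
      Lobj A T γ lam y μ d ≤ Lobj A T γ lam y μ b) :
    ∀ i ∈ T, (∑ k, A k i * (y k - A.mulVec d k)) = lam * (d i - μ i) := by
  intro i hiT
  have hi : i ∈ T ∪ Δ := Finset.mem_union_left _ hiT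
  set r := ∑ k, A k i * (y k - A.mulVec d k) with hr
  have key : ∀ t : ℝ, 0 ≤ (lam * (d i - μ i) - r) * t
      + ((1/2) * (∑ k, (A k i) ^ 2) + lam/2) * t ^ 2 := by
    intro t
    have := stat_perturb_nonneg A T Δ γ lam y μ d hγ hd0 hdmin hi t
    rw [if_pos hiT, if_pos hiT] at this
    nlinarith [this]
  have hC : 0 ≤ (1/2) * (∑ k, (A k i) ^ 2) + lam/2 := by
    have : 0 ≤ ∑ k, (A k i) ^ 2 := Finset.sum_nonneg fun k _ => sq_nonneg _
    linarith
  have := aux_quad _ _ hC key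
  linarith

lemma stat_D_abs (hTΔ : Disjoint T Δ) (hγ : 0 < γ)
    (hd0 : ∀ i ∉ T ∪ Δ, d i = 0)
    (hdmin : ∀ b : Fin m → ℝ, (∀ i ∉ T ∪ Δ, b i = 0) →
      Lobj A T γ lam y μ d ≤ Lobj A T γ lam y μ b) :
    ∀ i ∈ Δ, |∑ k, A k i * (y k - A.mulVec d k)| ≤ γ := by
  intro i hiΔ
  have hiT : i ∉ T := Finset.disjoint_right.mp hTΔ hiΔ
  have hi : i ∈ T ∪ Δ := Finset.mem_union_right _ hiΔ
  set r := ∑ k, A k i * (y k - A.mulVec d k) with hr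
  have hC : 0 ≤ (1/2) * (∑ k, (A k i) ^ 2) :=
    mul_nonneg (by norm_num) (Finset.sum_nonneg fun k _ => sq_nonneg _)
  refine aux_quad_abs _ _ _ hC hγ fun t => ?_
  have h1 := stat_perturb_nonneg A T Δ γ lam y μ d hγ hd0 hdmin hi t
  rw [if_neg hiT, if_neg hiT] at h1
  have h2 : |d i + t| - |d i| ≤ |t| := by
    have := abs_add_le (d i) t
    have h3 := abs_sub_abs_le_abs_sub (d i + t) (d i)
    simp at h3
    linarith
  nlinarith [mul_le_mul_of_nonneg_left h2 hγ.le]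

lemma stat_D_align (hTΔ : Disjoint T Δ) (hγ : 0 < γ)
    (hd0 : ∀ i ∉ T ∪ Δ, d i = 0)
    (hdmin : ∀ b : Fin m → ℝ, (∀ i ∉ T ∪ Δ, b i = 0) →
      Lobj A T γ lam y μ d ≤ Lobj A T γ lam y μ b) :
    ∀ i ∈ Δ, (∑ k, A k i * (y k - A.mulVec d k)) * d i = γ * |d i| := by
  intro i hiΔ
  have hiT : i ∉ T := Finset.disjoint_right.mp hTΔ hiΔ
  have hi : i ∈ T ∪ Δ := Finset.mem_union_right _ hiΔ
  set r := ∑ k, A k i * (y k - A.mulVec d k) with hr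
  by_cases hd : d i = 0
  · simp [hd]
  · have hdabs : 0 < |d i| := abs_pos.mpr hd
    set sgn : ℝ := if 0 < d i then 1 else -1 with hsgn
    have habs : ∀ t : ℝ, |t| ≤ |d i| → |d i + t| - |d i| = sgn * t := by
      intro t ht
      rcases lt_trichotomy (d i) 0 with hneg | hzero | hpos
      · have : d i + t ≤ 0 := by
          rw [abs_of_neg hneg] at ht
          have := abs_le.mp ht
          linarith [this.2]
        rw [abs_of_nonpos this, abs_of_neg hneg, hsgn, if_neg (by linarith)]
        ring
      · exact absurd hzero hd
      · have : 0 ≤ d i + t := by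
          rw [abs_of_pos hpos] at ht
          have := abs_le.mp ht
          linarith [this.1]
        rw [abs_of_nonneg this, abs_of_pos hpos, hsgn, if_pos hpos]
        ring
    have hC : 0 ≤ (1/2) * (∑ k, (A k i) ^ 2) :=
      mul_nonneg (by norm_num) (Finset.sum_nonneg fun k _ => sq_nonneg _)
    have key : ∀ t : ℝ, |t| ≤ |d i| →
        0 ≤ (γ * sgn - r) * t + ((1/2) * (∑ k, (A k i) ^ 2)) * t ^ 2 := by
      intro t ht
      have h1 := stat_perturb_nonneg A T Δ γ lam y μ d hγ hd0 hdmin hi t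
      rw [if_neg hiT, if_neg hiT, habs t ht] at h1
      nlinarith [h1]
    have hw := aux_quad_local _ _ _ hC hdabs key
    have hr' : r = γ * sgn := by linarith
    rw [hr', hsgn]
    rcases lt_trichotomy (d i) 0 with hneg | hzero | hpos
    · rw [if_neg (by linarith), abs_of_neg hneg]; ring
    · exact absurd hzero hd
    · rw [if_pos hpos, abs_of_pos hpos]; ring

end Stat

lemma lobj_master {n m : ℕ} (A : Matrix (Fin n) (Fin m) ℝ) (T : Finset (Fin m)) (γ lam : ℝ)
    (y : Fin n → ℝ) (μ : Fin m → ℝ) (d : Fin m → ℝ)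
    (hstatT : ∀ i ∈ T, (∑ k, A k i * (y k - A.mulVec d k)) = lam * (d i - μ i))
    (halign : ∀ i ∈ Tᶜ, (∑ k, A k i * (y k - A.mulVec d k)) * d i = γ * |d i|)
    (b : Fin m → ℝ) :
    Lobj A T γ lam y μ b = Lobj A T γ lam y μ d
      + ∑ i ∈ Tᶜ, (γ * |b i| - (∑ k, A k i * (y k - A.mulVec d k)) * b i)
      + (1/2) * ∑ k, (A.mulVec (fun j => b j - d j) k) ^ 2
      + (lam/2) * ∑ i ∈ T, (b i - d i) ^ 2 := by
  rw [lobj_expand A T γ lam y μ d b]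
  have h1 : lam * ∑ i ∈ T, (d i - μ i) * (b i - d i)
      = ∑ i ∈ T, (b i - d i) * (∑ k, A k i * (y k - A.mulVec d k)) := by
    rw [Finset.mul_sum]
    exact Finset.sum_congr rfl fun i hi => by rw [hstatT i hi]; ring
  have h2 : ∑ i, (b i - d i) * (∑ k, A k i * (y k - A.mulVec d k))
      = ∑ i ∈ T, (b i - d i) * (∑ k, A k i * (y k - A.mulVec d k))
        + ∑ i ∈ Tᶜ, (b i - d i) * (∑ k, A k i * (y k - A.mulVec d k)) :=
    (Finset.sum_add_sum_compl T _).symm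
  have h3 : γ * ∑ i ∈ Tᶜ, (|b i| - |d i|)
      - ∑ i ∈ Tᶜ, (b i - d i) * (∑ k, A k i * (y k - A.mulVec d k))
      = ∑ i ∈ Tᶜ, (γ * |b i| - (∑ k, A k i * (y k - A.mulVec d k)) * b i) := by
    rw [Finset.mul_sum, ← Finset.sum_sub_distrib]
    exact Finset.sum_congr rfl fun i hi => by
      have := halign i hi
      nlinarith [halign i hi]
  rw [h2, ← h1]
  linarith [h3]

lemma lobj_ge {n m : ℕ} (A : Matrix (Fin n) (Fin m) ℝ) (T : Finset (Fin m)) (γ lam : ℝ)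
    (hlam : 0 ≤ lam)
    (y : Fin n → ℝ) (μ : Fin m → ℝ) (d : Fin m → ℝ)
    (hstatT : ∀ i ∈ T, (∑ k, A k i * (y k - A.mulVec d k)) = lam * (d i - μ i))
    (halign : ∀ i ∈ Tᶜ, (∑ k, A k i * (y k - A.mulVec d k)) * d i = γ * |d i|)
    (habs : ∀ i ∈ Tᶜ, |∑ k, A k i * (y k - A.mulVec d k)| ≤ γ)
    (b : Fin m → ℝ) :
    Lobj A T γ lam y μ d ≤ Lobj A T γ lam y μ b := by
  rw [lobj_master A T γ lam y μ d hstatT halign b]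
  have s1 : 0 ≤ ∑ i ∈ Tᶜ, (γ * |b i| - (∑ k, A k i * (y k - A.mulVec d k)) * b i) := by
    apply Finset.sum_nonneg
    intro i hi
    have h1 : (∑ k, A k i * (y k - A.mulVec d k)) * b i ≤ γ * |b i| := by
      calc (∑ k, A k i * (y k - A.mulVec d k)) * b i
          ≤ |(∑ k, A k i * (y k - A.mulVec d k)) * b i| := le_abs_self _
        _ = |∑ k, A k i * (y k - A.mulVec d k)| * |b i| := abs_mul _ _
        _ ≤ γ * |b i| := mul_le_mul_of_nonneg_right (habs i hi) (abs_nonneg _)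
    linarith
  have s2 : 0 ≤ ∑ k, (A.mulVec (fun j => b j - d j) k) ^ 2 :=
    Finset.sum_nonneg fun k _ => sq_nonneg _
  have s3 : 0 ≤ ∑ i ∈ T, (b i - d i) ^ 2 := Finset.sum_nonneg fun i _ => sq_nonneg _
  nlinarith

/-- extend a pair of vectors on `T`, `Δ` to a vector on `T ∪ Δ`. -/
def extv {m : ℕ} (T Δ : Finset (Fin m)) (u : Idx T → ℝ) (w : Idx Δ → ℝ) : Idx (T ∪ Δ) → ℝ :=
  fun j => (if h : j.1 ∈ T then u ⟨j.1, h⟩ else 0) + (if h : j.1 ∈ Δ then w ⟨j.1, h⟩ else 0)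

section MatrixLayer
variable {n m : ℕ} (A : Matrix (Fin n) (Fin m) ℝ) (T Δ : Finset (Fin m)) (lam : ℝ)

lemma sum_union_subtype (hTΔ : Disjoint T Δ) (F : Fin m → ℝ) :
    ∑ j : Idx (T ∪ Δ), F j.1 = ∑ j : Idx T, F j.1 + ∑ j : Idx Δ, F j.1 := by
  rw [Finset.sum_coe_sort (T ∪ Δ) F, Finset.sum_coe_sort T F, Finset.sum_coe_sort Δ F,
    Finset.sum_union hTΔ]

lemma colsubT_mulVec (S : Finset (Fin m)) (z : Fin n → ℝ) (j : Idx S) :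
    ((colsub A S)ᵀ.mulVec z) j = ∑ k, A k j.1 * z k := by
  simp [colsub, Matrix.mulVec, dotProduct, Matrix.transpose_apply, mul_comm]

lemma mulVec_support (S : Finset (Fin m)) (x : Fin m → ℝ) (hx : ∀ i ∉ S, x i = 0) :
    A.mulVec x = (colsub A S).mulVec (fun j => x j.1) := by
  funext k
  simp only [Matrix.mulVec, dotProduct, colsub, Matrix.of_apply]
  rw [Finset.sum_coe_sort S (fun j => A k j * x j)]
  exact (Finset.sum_subset (Finset.subset_univ S)
    (fun i _ hi => by rw [hx i hi, mul_zero])).symm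

lemma AS_mulVec_extv (hTΔ : Disjoint T Δ) (u : Idx T → ℝ) (w : Idx Δ → ℝ) (k : Fin n) :
    (colsub A (T ∪ Δ)).mulVec (extv T Δ u w) k
      = (colsub A T).mulVec u k + (colsub A Δ).mulVec w k := by
  simp only [Matrix.mulVec, dotProduct, colsub, Matrix.of_apply]
  set F : Fin m → ℝ := fun x => A k x * ((if h : x ∈ T then u ⟨x, h⟩ else 0)
          + (if h : x ∈ Δ then w ⟨x, h⟩ else 0)) with hF
  have h0 : ∑ j : Idx (T ∪ Δ), A k j.1 * extv T Δ u w j = ∑ j : Idx (T ∪ Δ), F j.1 := rfl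
  rw [h0, sum_union_subtype T Δ hTΔ F]
  congr 1
  · refine Finset.sum_congr rfl fun j _ => ?_
    rw [hF]
    simp only []
    rw [dif_pos j.2, dif_neg (Finset.disjoint_left.mp hTΔ j.2), Subtype.coe_eta]
    ring
  · refine Finset.sum_congr rfl fun j _ => ?_
    rw [hF]
    simp only []
    rw [dif_pos j.2, dif_neg (Finset.disjoint_right.mp hTΔ j.2), Subtype.coe_eta]
    ring

lemma Q_mulVec_apply (x : Idx (T ∪ Δ) → ℝ) (j : Idx (T ∪ Δ)) :
    (Qmat A T Δ lam).mulVec x j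
      = (∑ k, A k j.1 * ((colsub A (T ∪ Δ)).mulVec x) k)
        + lam * (if j.1 ∈ T then x j else 0) := by
  simp only [Qmat, Matrix.add_mulVec, Matrix.smul_mulVec, Pi.add_apply, Pi.smul_apply,
    smul_eq_mul]
  congr 1
  · rw [← Matrix.mulVec_mulVec, colsubT_mulVec]
  · congr 1
    by_cases hT : j.1 ∈ T <;>
      simp [Matrix.mulVec, dotProduct, hT, ite_and, Finset.sum_ite_eq]

end MatrixLayer

section MatrixLayer2
variable {n m : ℕ} (A : Matrix (Fin n) (Fin m) ℝ) (T Δ : Finset (Fin m)) (lam : ℝ)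

lemma Q_inj (hQd : IsUnit (Qmat A T Δ lam).det) (x : Idx (T ∪ Δ) → ℝ)
    (hx : (Qmat A T Δ lam).mulVec x = 0) : x = 0 := by
  have := congrArg (fun v => (Qmat A T Δ lam)⁻¹.mulVec v) hx
  simpa [Matrix.mulVec_mulVec, Matrix.nonsing_inv_mul _ hQd, Matrix.mulVec_zero,
    Matrix.one_mulVec] using this

lemma quad_form_G (v : Idx T → ℝ) :
    v ⬝ᵥ ((colsub A T)ᵀ * colsub A T + lam • 1).mulVec v
      = ∑ k, ((colsub A T).mulVec v k) ^ 2 + lam * ∑ j, (v j) ^ 2 := by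
  rw [Matrix.add_mulVec, dotProduct_add, Matrix.smul_mulVec, Matrix.one_mulVec]
  congr 1
  · rw [← Matrix.mulVec_mulVec, Matrix.dotProduct_mulVec, Matrix.vecMul_transpose]
    simp [dotProduct, sq]
  · simp [dotProduct, smul_eq_mul, Finset.mul_sum, sq]
    exact Finset.sum_congr rfl fun j _ => by ring

lemma G_unit (hTΔ : Disjoint T Δ) (hlam : 0 ≤ lam)
    (hQd : IsUnit (Qmat A T Δ lam).det) :
    IsUnit ((colsub A T)ᵀ * colsub A T + lam • 1).det := by
  set G := (colsub A T)ᵀ * colsub A T + lam • 1 with hG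
  rw [isUnit_iff_ne_zero]
  intro hdet
  obtain ⟨v, hv0, hGv⟩ := (Matrix.exists_mulVec_eq_zero_iff).mpr hdet
  have hq : v ⬝ᵥ G.mulVec v = 0 := by rw [hGv]; simp
  rw [quad_form_G] at hq
  have h1 : ∑ k, ((colsub A T).mulVec v k) ^ 2 = 0 ∧ lam * ∑ j, (v j) ^ 2 = 0 := by
    constructor <;>
      nlinarith [Finset.sum_nonneg (fun k (_ : k ∈ Finset.univ) =>
          sq_nonneg ((colsub A T).mulVec v k)),
        Finset.sum_nonneg (fun j (_ : j ∈ Finset.univ) => sq_nonneg (v j)),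
        mul_nonneg hlam (Finset.sum_nonneg (fun j (_ : j ∈ Finset.univ) => sq_nonneg (v j)))]
  have hATv : (colsub A T).mulVec v = 0 := by
    funext k
    have := (Finset.sum_eq_zero_iff_of_nonneg
      (fun k (_ : k ∈ Finset.univ) => sq_nonneg ((colsub A T).mulVec v k))).mp h1.1 k
      (Finset.mem_univ k)
    exact pow_eq_zero_iff (by norm_num) |>.mp this
  have hlv : ∀ j, lam * v j = 0 := by
    intro j
    rcases mul_eq_zero.mp h1.2 with h | h
    · rw [h, zero_mul]
    · have := (Finset.sum_eq_zero_iff_of_nonneg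
        (fun j (_ : j ∈ Finset.univ) => sq_nonneg (v j))).mp h j (Finset.mem_univ j)
      rw [pow_eq_zero_iff (two_ne_zero) |>.mp this, mul_zero]
  -- extend v by zero and contradict invertibility of Q
  set x : Idx (T ∪ Δ) → ℝ := extv T Δ v 0 with hx
  have hQx : (Qmat A T Δ lam).mulVec x = 0 := by
    funext j
    rw [Q_mulVec_apply]
    have hz : ∀ k, (colsub A (T ∪ Δ)).mulVec x k = 0 := by
      intro k
      rw [hx, AS_mulVec_extv A T Δ hTΔ v 0 k, hATv]
      simp
    simp only [hz, mul_zero, Finset.sum_const_zero, zero_add]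
    by_cases hT : j.1 ∈ T
    · rw [if_pos hT, hx]
      have : extv T Δ v 0 j = v ⟨j.1, hT⟩ := by
        simp [extv, hT]
      rw [this, hlv]
      simp
    · rw [if_neg hT]
      simp
  have := Q_inj A T Δ lam hQd x hQx
  apply hv0
  funext j
  have hj : x ⟨j.1, Finset.mem_union_left Δ j.2⟩ = v j := by
    rw [hx]
    simp [extv, j.2, Subtype.coe_eta]
  rw [this] at hj
  simpa using hj.symm

end MatrixLayer2

section MatrixLayer3
variable {n m : ℕ} (A : Matrix (Fin n) (Fin m) ℝ) (T Δ : Finset (Fin m)) (lam : ℝ)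

lemma W_eq :
    (colsub A Δ)ᵀ * Mmat A T lam * colsub A Δ
      = (colsub A Δ)ᵀ * colsub A Δ
        - (colsub A Δ)ᵀ * colsub A T
          * (((colsub A T)ᵀ * colsub A T + lam • 1)⁻¹ * ((colsub A T)ᵀ * colsub A Δ)) := by
  simp only [Mmat, Matrix.mul_sub, Matrix.sub_mul, Matrix.mul_one, Matrix.one_mul,
    Matrix.mul_assoc]

/-- The key block computation: applying `Q` to the extension of
`(-G⁻¹ A_T' A_Δ w, w)` yields `(0, W w)`. -/
lemma Q_block (hTΔ : Disjoint T Δ)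
    (hGd : IsUnit ((colsub A T)ᵀ * colsub A T + lam • 1).det) (w : Idx Δ → ℝ) :
    (Qmat A T Δ lam).mulVec (extv T Δ
        (-(((colsub A T)ᵀ * colsub A T + lam • 1)⁻¹.mulVec
            (((colsub A T)ᵀ * colsub A Δ).mulVec w))) w)
      = fun j => if h : j.1 ∈ Δ then
          ((colsub A Δ)ᵀ * Mmat A T lam * colsub A Δ).mulVec w ⟨j.1, h⟩ else 0 := by
  set G := (colsub A T)ᵀ * colsub A T + lam • 1 with hG
  set t := ((colsub A T)ᵀ * colsub A Δ).mulVec w with ht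
  set u : Idx T → ℝ := -(G⁻¹.mulVec t) with hu
  set z := (colsub A (T ∪ Δ)).mulVec (extv T Δ u w) with hz
  have hzsum : z = (colsub A T).mulVec u + (colsub A Δ).mulVec w := by
    funext k
    rw [hz, AS_mulVec_extv A T Δ hTΔ u w k]
    rfl
  -- T-rows vanish
  have hTrow : (colsub A T)ᵀ.mulVec z + lam • u = 0 := by
    rw [hzsum, Matrix.mulVec_add, Matrix.mulVec_mulVec, Matrix.mulVec_mulVec]
    have h1 : ((colsub A T)ᵀ * colsub A T).mulVec u + lam • u = G.mulVec u := by
      rw [hG, Matrix.add_mulVec, Matrix.smul_mulVec, Matrix.one_mulVec]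
    have h2 : G.mulVec u = -t := by
      rw [hu, Matrix.mulVec_neg, Matrix.mulVec_mulVec, Matrix.mul_nonsing_inv _ hGd,
        Matrix.one_mulVec]
    have h3 : ((colsub A T)ᵀ * colsub A Δ).mulVec w = t := ht.symm
    rw [add_comm (((colsub A T)ᵀ * colsub A T) *ᵥ u), add_assoc, h3, h1, h2]
    simp
  -- Δ-rows give W w
  have hDrow : (colsub A Δ)ᵀ.mulVec z
      = ((colsub A Δ)ᵀ * Mmat A T lam * colsub A Δ).mulVec w := by
    rw [hzsum, Matrix.mulVec_add, Matrix.mulVec_mulVec, Matrix.mulVec_mulVec, W_eq,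
      Matrix.sub_mulVec]
    have h1 : ((colsub A Δ)ᵀ * colsub A T).mulVec u
        = -(((colsub A Δ)ᵀ * colsub A T)
            * (G⁻¹ * ((colsub A T)ᵀ * colsub A Δ))).mulVec w := by
      rw [hu, Matrix.mulVec_neg, ht]
      simp only [Matrix.mulVec_mulVec, Matrix.mul_assoc]
    rw [h1, sub_eq_add_neg, ← hG]
    exact add_comm _ _
  funext j
  rw [Q_mulVec_apply]
  by_cases hT : j.1 ∈ T
  · have hnΔ : j.1 ∉ Δ := Finset.disjoint_left.mp hTΔ hT
    rw [dif_neg hnΔ, if_pos hT]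
    have hext : extv T Δ u w j = u ⟨j.1, hT⟩ := by simp [extv, hT, hnΔ]
    have hr : ∑ k, A k j.1 * z k = ((colsub A T)ᵀ.mulVec z) ⟨j.1, hT⟩ :=
      (colsubT_mulVec A T z ⟨j.1, hT⟩).symm
    rw [hext, hr]
    have := congrFun hTrow ⟨j.1, hT⟩
    simpa using this
  · have hΔ : j.1 ∈ Δ := (Finset.mem_union.mp j.2).resolve_left hT
    rw [dif_pos hΔ, if_neg hT]
    have hr : ∑ k, A k j.1 * z k = ((colsub A Δ)ᵀ.mulVec z) ⟨j.1, hΔ⟩ :=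
      (colsubT_mulVec A Δ z ⟨j.1, hΔ⟩).symm
    rw [hr, hDrow]
    simp

lemma W_unit (hTΔ : Disjoint T Δ) (hlam : 0 ≤ lam)
    (hQd : IsUnit (Qmat A T Δ lam).det) :
    IsUnit ((colsub A Δ)ᵀ * Mmat A T lam * colsub A Δ).det := by
  have hGd := G_unit A T Δ lam hTΔ hlam hQd
  rw [isUnit_iff_ne_zero]
  intro hdet
  obtain ⟨x, hx0, hWx⟩ := (Matrix.exists_mulVec_eq_zero_iff).mpr hdet
  have hQx := Q_block A T Δ lam hTΔ hGd x
  rw [hWx] at hQx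
  have hQx' : (Qmat A T Δ lam).mulVec (extv T Δ
      (-((((colsub A T)ᵀ * colsub A T + lam • 1)⁻¹).mulVec
          (((colsub A T)ᵀ * colsub A Δ).mulVec x))) x) = 0 := by
    rw [hQx]
    funext j
    by_cases h : j.1 ∈ Δ <;> simp [h]
  have := Q_inj A T Δ lam hQd _ hQx'
  apply hx0
  funext j
  have hj := congrFun this ⟨j.1, Finset.mem_union_right T j.2⟩
  have hnT : j.1 ∉ T := Finset.disjoint_right.mp hTΔ j.2
  simpa [extv, hnT, j.2, Subtype.coe_eta] using hj

end MatrixLayer3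

section MatrixLayer4
variable {n m : ℕ} (A : Matrix (Fin n) (Fin m) ℝ) (T Δ : Finset (Fin m)) (lam : ℝ)

lemma G_symm : ((colsub A T)ᵀ * colsub A T + lam • 1)ᵀ
    = (colsub A T)ᵀ * colsub A T + lam • 1 := by
  simp [Matrix.transpose_add, Matrix.transpose_mul, Matrix.transpose_smul,
    Matrix.transpose_one, Matrix.transpose_transpose]

lemma M_symm : (Mmat A T lam)ᵀ = Mmat A T lam := by
  simp only [Mmat, Matrix.transpose_sub, Matrix.transpose_one, Matrix.transpose_mul,
    Matrix.transpose_transpose, Matrix.transpose_nonsing_inv, G_symm, Matrix.mul_assoc]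

lemma W_symm : ((colsub A Δ)ᵀ * Mmat A T lam * colsub A Δ)ᵀ
    = (colsub A Δ)ᵀ * Mmat A T lam * colsub A Δ := by
  simp only [Matrix.transpose_mul, Matrix.transpose_transpose, M_symm, Matrix.mul_assoc]

lemma P_symm : (Pmat A T Δ lam)ᵀ = Pmat A T Δ lam := by
  rw [Pmat, Matrix.transpose_nonsing_inv, W_symm]

end MatrixLayer4

section Residual
variable {n m : ℕ} (A : Matrix (Fin n) (Fin m) ℝ) (T Δ : Finset (Fin m))
  (γ lam : ℝ) (y : Fin n → ℝ) (μ : Fin m → ℝ) (d : Fin m → ℝ)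

lemma key_residual (hTΔ : Disjoint T Δ) (hlam : 0 ≤ lam)
    (hQ : IsUnit (Qmat A T Δ lam))
    (hd0 : ∀ i ∉ T ∪ Δ, d i = 0)
    (hstatT : ∀ i ∈ T, (∑ k, A k i * (y k - A.mulVec d k)) = lam * (d i - μ i))
    (ω : Fin m) (hω : ω ∉ T ∪ Δ) :
    (∑ k, A k ω * (y k - A.mulVec d k))
      = (∑ k, A k ω * (y k - A.mulVec (cvec A T Δ lam y μ) k))
        + ((Pmat A T Δ lam * (colsub A Δ)ᵀ * Mmat A T lam).mulVec (fun i => A i ω)) ⬝ᵥ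
            (fun j : Idx Δ => ∑ k, A k j.1 * (y k - A.mulVec d k)) := by
  classical
  have hQd : IsUnit (Qmat A T Δ lam).det := (Matrix.isUnit_iff_isUnit_det _).mp hQ
  have hGd := G_unit A T Δ lam hTΔ hlam hQd
  have hWd := W_unit A T Δ lam hTΔ hlam hQd
  set r : Fin m → ℝ := fun i => ∑ k, A k i * (y k - A.mulVec d k) with hr
  set rΔ : Idx Δ → ℝ := fun j => r j.1 with hrΔ
  set w : Idx Δ → ℝ := (Pmat A T Δ lam).mulVec rΔ with hw
  set u : Idx T → ℝ := -((((colsub A T)ᵀ * colsub A T + lam • 1)⁻¹).mulVec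
      (((colsub A T)ᵀ * colsub A Δ).mulVec w)) with hu
  set rhs : Idx (T ∪ Δ) → ℝ := fun j =>
    (∑ k, A k j.1 * y k) + (if (j : Fin m) ∈ T then lam * μ j.1 else 0) with hrhs
  set e : Idx (T ∪ Δ) → ℝ := fun j => if j.1 ∈ T then 0 else r j.1 with he
  set cS : Idx (T ∪ Δ) → ℝ := fun j => cvec A T Δ lam y μ j.1 with hcS
  set dS : Idx (T ∪ Δ) → ℝ := fun j => d j.1 with hdS
  have hcS' : cS = (Qmat A T Δ lam)⁻¹.mulVec rhs := by
    funext j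
    rw [hcS]
    simp only [cvec, dif_pos j.2]
    rfl
  have hQcS : (Qmat A T Δ lam).mulVec cS = rhs := by
    rw [hcS', Matrix.mulVec_mulVec, Matrix.mul_nonsing_inv _ hQd, Matrix.one_mulVec]
  have hAd : A.mulVec d = (colsub A (T ∪ Δ)).mulVec dS :=
    mulVec_support A (T ∪ Δ) d hd0
  have hAc : A.mulVec (cvec A T Δ lam y μ) = (colsub A (T ∪ Δ)).mulVec cS :=
    mulVec_support A (T ∪ Δ) (cvec A T Δ lam y μ) (fun i hi => dif_neg hi)
  have hQdS : (Qmat A T Δ lam).mulVec dS = rhs - e := by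
    funext j
    rw [Q_mulVec_apply, ← hAd]
    have hsplit : ∑ k, A k j.1 * (A.mulVec d) k = (∑ k, A k j.1 * y k) - r j.1 := by
      rw [hr]
      simp only [← Finset.sum_sub_distrib]
      exact Finset.sum_congr rfl fun k _ => by ring
    rw [hsplit]
    by_cases hT : j.1 ∈ T
    · rw [hrhs, he]
      simp only [hT, if_pos, Pi.sub_apply, hdS]
      have hthis : r j.1 = lam * (d j.1 - μ j.1) := hstatT j.1 hT
      linarith [hthis]
    · rw [hrhs, he]
      simp only [hT, if_neg, Pi.sub_apply, if_false]
      ring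
  have hQvb : (Qmat A T Δ lam).mulVec (extv T Δ u w) = e := by
    rw [hu, Q_block A T Δ lam hTΔ hGd w]
    funext j
    by_cases hT : j.1 ∈ T
    · have hnΔ : j.1 ∉ Δ := Finset.disjoint_left.mp hTΔ hT
      rw [dif_neg hnΔ, he]
      simp [hT]
    · have hΔ : j.1 ∈ Δ := (Finset.mem_union.mp j.2).resolve_left hT
      rw [dif_pos hΔ, he]
      simp only [hT, if_false]
      rw [hw, Matrix.mulVec_mulVec, Pmat, Matrix.mul_nonsing_inv _ hWd, Matrix.one_mulVec]
  have hcd : cS - dS = extv T Δ u w := by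
    have h0 : (Qmat A T Δ lam).mulVec (cS - dS - extv T Δ u w) = 0 := by
      rw [Matrix.mulVec_sub, Matrix.mulVec_sub, hQcS, hQdS, hQvb]
      abel
    have := Q_inj A T Δ lam hQd _ h0
    rwa [sub_eq_zero] at this
  have hAcd : (fun k => A.mulVec (cvec A T Δ lam y μ) k - A.mulVec d k)
      = (Mmat A T lam).mulVec ((colsub A Δ).mulVec w) := by
    funext k
    have h1 : A.mulVec (cvec A T Δ lam y μ) k - A.mulVec d k
        = (colsub A (T ∪ Δ)).mulVec (cS - dS) k := by
      rw [Matrix.mulVec_sub, hAc, hAd]; rfl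
    rw [h1, hcd]
    rw [show (colsub A (T ∪ Δ)).mulVec (extv T Δ u w) k
        = (colsub A T).mulVec u k + (colsub A Δ).mulVec w k from
      AS_mulVec_extv A T Δ hTΔ u w k]
    rw [hu]
    simp only [Mmat, Matrix.sub_mulVec, Matrix.one_mulVec, Matrix.mulVec_neg,
      ← Matrix.mulVec_mulVec, Pi.sub_apply, Pi.neg_apply, Pi.add_apply]
    ring
  have hfin : r ω - (∑ k, A k ω * (y k - A.mulVec (cvec A T Δ lam y μ) k))
      = (fun k => A k ω) ⬝ᵥ ((Mmat A T lam * colsub A Δ * Pmat A T Δ lam).mulVec rΔ) := by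
    have h1 : r ω - (∑ k, A k ω * (y k - A.mulVec (cvec A T Δ lam y μ) k))
        = ∑ k, A k ω * (A.mulVec (cvec A T Δ lam y μ) k - A.mulVec d k) := by
      rw [hr]
      simp only [← Finset.sum_sub_distrib]
      exact Finset.sum_congr rfl fun k _ => by ring
    rw [h1]
    have h2 : (fun k => A k ω * (A.mulVec (cvec A T Δ lam y μ) k - A.mulVec d k))
        = fun k => A k ω * ((Mmat A T lam).mulVec ((colsub A Δ).mulVec w) k) := by
      funext k; rw [congrFun hAcd k]
    rw [show (∑ k, A k ω * (A.mulVec (cvec A T Δ lam y μ) k - A.mulVec d k))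
        = ∑ k, A k ω * ((Mmat A T lam).mulVec ((colsub A Δ).mulVec w) k) from
      Finset.sum_congr rfl fun k _ => by rw [congrFun hAcd k]]
    rw [hw]
    simp only [Matrix.mulVec_mulVec, ← Matrix.mul_assoc]
    rfl
  have htrans : (fun k => A k ω) ⬝ᵥ ((Mmat A T lam * colsub A Δ * Pmat A T Δ lam).mulVec rΔ)
      = ((Pmat A T Δ lam * (colsub A Δ)ᵀ * Mmat A T lam).mulVec (fun i => A i ω)) ⬝ᵥ rΔ := by
    rw [Matrix.dotProduct_mulVec]
    congr 1
    rw [show (Pmat A T Δ lam * (colsub A Δ)ᵀ * Mmat A T lam)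
        = (Mmat A T lam * colsub A Δ * Pmat A T Δ lam)ᵀ by
      simp only [Matrix.transpose_mul, M_symm, P_symm, Matrix.transpose_transpose,
        Matrix.mul_assoc]]
    rw [← Matrix.vecMul_transpose, Matrix.transpose_transpose]
  have hfin2 := hfin
  rw [htrans] at hfin2
  linarith [hfin2]

section Bound
variable {n m : ℕ} (A : Matrix (Fin n) (Fin m) ℝ) (T Δ : Finset (Fin m))
  (γ lam : ℝ) (y : Fin n → ℝ) (μ : Fin m → ℝ) (d : Fin m → ℝ)

lemma sup_l1_eq : (⨆ ω : Idx ((T ∪ Δ)ᶜ),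
    l1 ((Pmat A T Δ lam * (colsub A Δ)ᵀ * Mmat A T lam).mulVec (fun i => A i ω.1)))
    = 1 - ERC A T Δ lam := by
  rw [ERC]; ring

lemma l1_bound (hω : (ω : Fin m) ∉ T ∪ Δ) :
    l1 ((Pmat A T Δ lam * (colsub A Δ)ᵀ * Mmat A T lam).mulVec (fun i => A i ω))
      ≤ 1 - ERC A T Δ lam := by
  rw [← sup_l1_eq A T Δ lam]
  exact le_ciSup (Set.Finite.bddAbove (Set.finite_range
    (fun ω' : Idx ((T ∪ Δ)ᶜ) =>
      l1 ((Pmat A T Δ lam * (colsub A Δ)ᵀ * Mmat A T lam).mulVec (fun i => A i ω'.1)))))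
    (⟨ω, Finset.mem_compl.mpr hω⟩ : Idx ((T ∪ Δ)ᶜ))

lemma gammaNum_bound (hω : (ω : Fin m) ∉ T ∪ Δ) :
    |∑ k, A k ω * (y k - A.mulVec (cvec A T Δ lam y μ) k)| ≤ gammaNum A T Δ lam y μ := by
  rw [gammaNum, linf]
  exact le_ciSup (Set.Finite.bddAbove (Set.finite_range
    (fun j : Idx ((T ∪ Δ)ᶜ) => |∑ i, A i j.1 * (y i - A.mulVec (cvec A T Δ lam y μ) i)|)))
    (⟨ω, Finset.mem_compl.mpr hω⟩ : Idx ((T ∪ Δ)ᶜ))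

lemma dot_bound (habs : ∀ i ∈ Δ, |∑ k, A k i * (y k - A.mulVec d k)| ≤ γ) (ω : Fin m) :
    |((Pmat A T Δ lam * (colsub A Δ)ᵀ * Mmat A T lam).mulVec (fun i => A i ω)) ⬝ᵥ
        (fun j : Idx Δ => ∑ k, A k j.1 * (y k - A.mulVec d k))|
      ≤ l1 ((Pmat A T Δ lam * (colsub A Δ)ᵀ * Mmat A T lam).mulVec (fun i => A i ω)) * γ := by
  set v := (Pmat A T Δ lam * (colsub A Δ)ᵀ * Mmat A T lam).mulVec (fun i => A i ω) with hv
  calc |v ⬝ᵥ (fun j : Idx Δ => ∑ k, A k j.1 * (y k - A.mulVec d k))|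
      ≤ ∑ j, |v j * (∑ k, A k j.1 * (y k - A.mulVec d k))| :=
        Finset.abs_sum_le_sum_abs _ _
    _ ≤ ∑ j, |v j| * γ := by
        refine Finset.sum_le_sum fun j _ => ?_
        rw [abs_mul]
        exact mul_le_mul_of_nonneg_left (habs j.1 j.2) (abs_nonneg _)
    _ = l1 v * γ := by rw [l1, Finset.sum_mul]

lemma r_off_bound (hTΔ : Disjoint T Δ) (hγ : 0 < γ) (hlam : 0 ≤ lam)
    (hQ : IsUnit (Qmat A T Δ lam)) (hERC : 0 < ERC A T Δ lam)
    (hγge : γ ≥ gammaNum A T Δ lam y μ / ERC A T Δ lam)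
    (hd0 : ∀ i ∉ T ∪ Δ, d i = 0)
    (hstatT : ∀ i ∈ T, (∑ k, A k i * (y k - A.mulVec d k)) = lam * (d i - μ i))
    (habs : ∀ i ∈ Δ, |∑ k, A k i * (y k - A.mulVec d k)| ≤ γ) :
    ∀ ω ∉ T ∪ Δ, |∑ k, A k ω * (y k - A.mulVec d k)| ≤ γ := by
  intro ω hω
  have hres := key_residual A T Δ lam y μ d hTΔ hlam hQ hd0 hstatT ω hω
  have h1 := gammaNum_bound A T Δ lam y μ (ω := ω) hω
  have h2 := l1_bound A T Δ lam (ω := ω) hω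
  have h3 := dot_bound A T Δ γ lam y d habs ω
  have h4 : gammaNum A T Δ lam y μ ≤ γ * ERC A T Δ lam := by
    rw [ge_iff_le, div_le_iff₀ hERC] at hγge
    exact hγge
  have h5 : l1 ((Pmat A T Δ lam * (colsub A Δ)ᵀ * Mmat A T lam).mulVec (fun i => A i ω)) * γ
      ≤ (1 - ERC A T Δ lam) * γ := mul_le_mul_of_nonneg_right h2 hγ.le
  rw [hres]
  calc |(∑ k, A k ω * (y k - A.mulVec (cvec A T Δ lam y μ) k))
        + ((Pmat A T Δ lam * (colsub A Δ)ᵀ * Mmat A T lam).mulVec (fun i => A i ω)) ⬝ᵥ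
            (fun j : Idx Δ => ∑ k, A k j.1 * (y k - A.mulVec d k))|
      ≤ |∑ k, A k ω * (y k - A.mulVec (cvec A T Δ lam y μ) k)|
        + |((Pmat A T Δ lam * (colsub A Δ)ᵀ * Mmat A T lam).mulVec (fun i => A i ω)) ⬝ᵥ
            (fun j : Idx Δ => ∑ k, A k j.1 * (y k - A.mulVec d k))| := abs_add_le _ _
    _ ≤ γ * ERC A T Δ lam + (1 - ERC A T Δ lam) * γ := by linarith
    _ = γ := by ring

end Bound

section Uniq
variable {n m : ℕ} (A : Matrix (Fin n) (Fin m) ℝ) (T Δ : Finset (Fin m))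
  (γ lam : ℝ) (y : Fin n → ℝ) (μ : Fin m → ℝ) (d : Fin m → ℝ)

lemma M_mul_AT (hGd : IsUnit ((colsub A T)ᵀ * colsub A T + lam • 1).det) :
    Mmat A T lam * colsub A T
      = lam • (colsub A T * ((colsub A T)ᵀ * colsub A T + lam • 1)⁻¹) := by
  set G := (colsub A T)ᵀ * colsub A T + lam • 1 with hG
  have hATAT : (colsub A T)ᵀ * colsub A T = G - lam • 1 := by rw [hG]; abel
  have hGG : G⁻¹ * (G - lam • 1) = 1 - lam • G⁻¹ := by
    rw [Matrix.mul_sub, Matrix.nonsing_inv_mul _ hGd, Matrix.mul_smul, Matrix.mul_one]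
  calc Mmat A T lam * colsub A T
      = colsub A T - colsub A T * (G⁻¹ * ((colsub A T)ᵀ * colsub A T)) := by
        rw [Mmat, Matrix.sub_mul, Matrix.one_mul, ← hG, Matrix.mul_assoc,
          Matrix.mul_assoc]
    _ = colsub A T - colsub A T * (1 - lam • G⁻¹) := by rw [hATAT, hGG]
    _ = lam • (colsub A T * G⁻¹) := by
        rw [Matrix.mul_sub, Matrix.mul_one, Matrix.mul_smul, sub_sub_cancel]

lemma sum_Tc (hTΔ : Disjoint T Δ) (f : Fin m → ℝ) :
    ∑ i ∈ Tᶜ, f i = ∑ i ∈ Δ, f i + ∑ i ∈ (T ∪ Δ)ᶜ, f i := by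
  have hdisj : Disjoint Δ ((T ∪ Δ)ᶜ) :=
    Finset.disjoint_left.mpr fun x hxΔ hxc =>
      (Finset.mem_compl.mp hxc) (Finset.mem_union_right T hxΔ)
  rw [← Finset.sum_union hdisj]
  congr 1
  ext x
  simp only [Finset.mem_union, Finset.mem_compl, Finset.mem_union]
  constructor
  · intro hx
    by_cases h : x ∈ Δ
    · exact Or.inl h
    · exact Or.inr (fun hh => hh.elim hx h)
  · rintro (h | h)
    · exact Finset.disjoint_right.mp hTΔ h
    · exact fun hT => h (Or.inl hT)

lemma uniq_off (hTΔ : Disjoint T Δ) (hγ : 0 < γ) (hlam : 0 ≤ lam)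
    (hQ : IsUnit (Qmat A T Δ lam)) (hERC : 0 < ERC A T Δ lam)
    (hd0 : ∀ i ∉ T ∪ Δ, d i = 0)
    (habs : ∀ i ∈ Δ, |∑ k, A k i * (y k - A.mulVec d k)| ≤ γ)
    (halignΔ : ∀ i ∈ Δ, (∑ k, A k i * (y k - A.mulVec d k)) * d i = γ * |d i|)
    (b : Fin m → ℝ)
    (hAb : A.mulVec b = A.mulVec d)
    (hlamb : ∀ i ∈ T, lam * (b i - d i) = 0)
    (hsign : ∀ i ∈ Tᶜ, γ * |b i| = (∑ k, A k i * (y k - A.mulVec d k)) * b i)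
    (hl1eq : ∑ i ∈ Tᶜ, |b i| = ∑ i ∈ Tᶜ, |d i|) :
    ∀ ω ∉ T ∪ Δ, b ω = 0 := by
  classical
  have hQd : IsUnit (Qmat A T Δ lam).det := (Matrix.isUnit_iff_isUnit_det _).mp hQ
  have hGd := G_unit A T Δ lam hTΔ hlam hQd
  have hWd := W_unit A T Δ lam hTΔ hlam hQd
  set r : Fin m → ℝ := fun i => ∑ k, A k i * (y k - A.mulVec d k) with hr
  set rΔ : Idx Δ → ℝ := fun j => r j.1 with hrΔ
  set N := (colsub A Δ)ᵀ * Mmat A T lam with hN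
  set W := (colsub A Δ)ᵀ * Mmat A T lam * colsub A Δ with hW
  set h : Fin m → ℝ := fun j => b j - d j with hh
  set hΔ : Idx Δ → ℝ := fun j => h j.1 with hhΔ
  set hT : Idx T → ℝ := fun j => h j.1 with hhT
  -- A h = 0 split into three groups
  have hAh : ∀ k, (colsub A T).mulVec hT k + (colsub A Δ).mulVec hΔ k
      + (∑ ω ∈ (T ∪ Δ)ᶜ, A k ω * h ω) = 0 := by
    intro k
    have h0 : ∑ j, A k j * h j = 0 := by
      have hc := congrFun hAb k
      simp only [Matrix.mulVec, dotProduct] at hc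
      have : ∑ j, A k j * h j = ∑ j, A k j * b j - ∑ j, A k j * d j := by
        rw [← Finset.sum_sub_distrib]
        exact Finset.sum_congr rfl fun j _ => by simp only [hh]; ring
      rw [this, hc, sub_self]
    have hsplit : ∑ j, A k j * h j
        = ∑ j ∈ T, A k j * h j + ∑ j ∈ Δ, A k j * h j + ∑ j ∈ (T ∪ Δ)ᶜ, A k j * h j := by
      rw [← Finset.sum_add_sum_compl (T ∪ Δ) (fun j => A k j * h j),
        Finset.sum_union hTΔ]
    have e1 : (colsub A T).mulVec hT k = ∑ j ∈ T, A k j * h j := by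
      simp only [Matrix.mulVec, dotProduct, colsub, Matrix.of_apply, hhT]
      exact Finset.sum_coe_sort T (fun j => A k j * h j)
    have e2 : (colsub A Δ).mulVec hΔ k = ∑ j ∈ Δ, A k j * h j := by
      simp only [Matrix.mulVec, dotProduct, colsub, Matrix.of_apply, hhΔ]
      exact Finset.sum_coe_sort Δ (fun j => A k j * h j)
    rw [e1, e2, ← hsplit, h0]
  -- apply N to the three groups
  have hNT : N.mulVec ((colsub A T).mulVec hT) = 0 := by
    rw [Matrix.mulVec_mulVec, hN, Matrix.mul_assoc, M_mul_AT A T lam hGd,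
      Matrix.mul_smul, Matrix.smul_mulVec]
    funext jΔ
    simp only [Pi.smul_apply, smul_eq_mul, Matrix.mulVec, dotProduct, Pi.zero_apply,
      Finset.mul_sum]
    apply Finset.sum_eq_zero
    intro jT _
    have h1 : lam * hT jT = 0 := by
      simp only [hhT, hh]
      exact hlamb jT.1 jT.2
    rw [mul_left_comm, h1, mul_zero]
  have hNΔ : N.mulVec ((colsub A Δ).mulVec hΔ) = W.mulVec hΔ := by
    rw [Matrix.mulVec_mulVec, hN, hW]
  have hNoff : ∀ jΔ : Idx Δ, N.mulVec (fun k => ∑ ω ∈ (T ∪ Δ)ᶜ, A k ω * h ω) jΔ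
      = ∑ ω ∈ (T ∪ Δ)ᶜ, h ω * (N.mulVec (fun k => A k ω)) jΔ := by
    intro jΔ
    simp only [Matrix.mulVec, dotProduct]
    calc ∑ k, N jΔ k * ∑ ω ∈ (T ∪ Δ)ᶜ, A k ω * h ω
        = ∑ k, ∑ ω ∈ (T ∪ Δ)ᶜ, N jΔ k * (A k ω * h ω) :=
          Finset.sum_congr rfl fun k _ => Finset.mul_sum _ _ _
      _ = ∑ ω ∈ (T ∪ Δ)ᶜ, ∑ k, N jΔ k * (A k ω * h ω) := Finset.sum_comm
      _ = ∑ ω ∈ (T ∪ Δ)ᶜ, h ω * ∑ k, N jΔ k * A k ω := by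
          refine Finset.sum_congr rfl fun ω _ => ?_
          rw [Finset.mul_sum]
          exact Finset.sum_congr rfl fun k _ => by ring
  have hWh : ∀ jΔ : Idx Δ, W.mulVec hΔ jΔ
      = -∑ ω ∈ (T ∪ Δ)ᶜ, h ω * (N.mulVec (fun k => A k ω)) jΔ := by
    intro jΔ
    have hz : N.mulVec (fun k => (colsub A T).mulVec hT k + (colsub A Δ).mulVec hΔ k
        + (∑ ω ∈ (T ∪ Δ)ᶜ, A k ω * h ω)) = 0 := by
      have : (fun k => (colsub A T).mulVec hT k + (colsub A Δ).mulVec hΔ k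
          + (∑ ω ∈ (T ∪ Δ)ᶜ, A k ω * h ω)) = (0 : Fin n → ℝ) := by
        funext k; exact hAh k
      rw [this, Matrix.mulVec_zero]
    have hsplitN : N.mulVec (fun k => (colsub A T).mulVec hT k + (colsub A Δ).mulVec hΔ k
        + (∑ ω ∈ (T ∪ Δ)ᶜ, A k ω * h ω)) jΔ
        = N.mulVec ((colsub A T).mulVec hT) jΔ + N.mulVec ((colsub A Δ).mulVec hΔ) jΔ
          + N.mulVec (fun k => ∑ ω ∈ (T ∪ Δ)ᶜ, A k ω * h ω) jΔ := by
      simp only [Matrix.mulVec, dotProduct, mul_add, Finset.sum_add_distrib]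
    have := congrFun hz jΔ
    rw [hsplitN] at this
    rw [congrFun hNT jΔ, hNΔ] at this
    rw [hNoff jΔ] at this
    simp only [Pi.zero_apply] at this
    linarith [this]
  -- hΔ in terms of off-support components
  have hhd : ∀ i : Idx Δ, hΔ i
      = -∑ ω ∈ (T ∪ Δ)ᶜ, h ω *
          ((Pmat A T Δ lam * (colsub A Δ)ᵀ * Mmat A T lam).mulVec (fun k => A k ω)) i := by
    intro i
    have hPN : ∀ ω : Fin m,
        ((Pmat A T Δ lam * (colsub A Δ)ᵀ * Mmat A T lam).mulVec (fun k => A k ω)) i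
        = ∑ jΔ, W⁻¹ i jΔ * (N.mulVec (fun k => A k ω)) jΔ := by
      intro ω
      have hPW : Pmat A T Δ lam * (colsub A Δ)ᵀ * Mmat A T lam = W⁻¹ * N := by
        rw [hN, hW, Pmat, Matrix.mul_assoc]
      rw [hPW, ← Matrix.mulVec_mulVec]
      rfl
    have h1 : hΔ i = ∑ jΔ, W⁻¹ i jΔ * (W.mulVec hΔ) jΔ := by
      have e : (W⁻¹ * W).mulVec hΔ = hΔ := by
        rw [Matrix.nonsing_inv_mul _ hWd, Matrix.one_mulVec]
      have e2 : (W⁻¹ * W).mulVec hΔ i = W⁻¹.mulVec (W.mulVec hΔ) i := by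
        rw [Matrix.mulVec_mulVec]
      rw [← congrFun e i, e2]
      rfl
    rw [h1]
    calc ∑ jΔ, W⁻¹ i jΔ * (W.mulVec hΔ) jΔ
        = ∑ jΔ, W⁻¹ i jΔ *
            (-∑ ω ∈ (T ∪ Δ)ᶜ, h ω * (N.mulVec (fun k => A k ω)) jΔ) :=
          Finset.sum_congr rfl fun jΔ _ => by rw [hWh jΔ]
      _ = -∑ jΔ, ∑ ω ∈ (T ∪ Δ)ᶜ, W⁻¹ i jΔ * (h ω * (N.mulVec (fun k => A k ω)) jΔ) := by
          rw [← Finset.sum_neg_distrib]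
          exact Finset.sum_congr rfl fun jΔ _ => by
            rw [mul_neg, Finset.mul_sum]
      _ = -∑ ω ∈ (T ∪ Δ)ᶜ, ∑ jΔ, W⁻¹ i jΔ * (h ω * (N.mulVec (fun k => A k ω)) jΔ) := by
          rw [Finset.sum_comm]
      _ = -∑ ω ∈ (T ∪ Δ)ᶜ, h ω * ∑ jΔ, W⁻¹ i jΔ * (N.mulVec (fun k => A k ω)) jΔ := by
          congr 1
          refine Finset.sum_congr rfl fun ω _ => ?_
          rw [Finset.mul_sum]
          exact Finset.sum_congr rfl fun jΔ _ => by ring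
      _ = -∑ ω ∈ (T ∪ Δ)ᶜ, h ω *
            ((Pmat A T Δ lam * (colsub A Δ)ᵀ * Mmat A T lam).mulVec (fun k => A k ω)) i := by
          congr 1
          exact Finset.sum_congr rfl fun ω _ => by rw [hPN ω]
  -- the dot product computation
  set X := ∑ i : Idx Δ, rΔ i * hΔ i with hX
  have hXa : X = γ * (∑ i ∈ Δ, |b i| - ∑ i ∈ Δ, |d i|) := by
    rw [hX, ← Finset.sum_sub_distrib, Finset.mul_sum]
    rw [show ∑ i : Idx Δ, rΔ i * hΔ i = ∑ i ∈ Δ, r i * h i from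
      Finset.sum_coe_sort Δ (fun i => r i * h i)]
    refine Finset.sum_congr rfl fun i hi => ?_
    have hiTc : i ∈ Tᶜ := Finset.mem_compl.mpr (Finset.disjoint_right.mp hTΔ hi)
    have h1 : γ * |b i| = r i * b i := hsign i hiTc
    have h2 : r i * d i = γ * |d i| := halignΔ i hi
    have h3 : r i * h i = r i * b i - r i * d i := by simp only [hh]; ring
    rw [h3, ← h1, h2]
    ring
  have hXb : X ≥ -((1 - ERC A T Δ lam) * γ * ∑ ω ∈ (T ∪ Δ)ᶜ, |h ω|) := by
    rw [hX]
    have h1 : ∑ i : Idx Δ, rΔ i * hΔ i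
        = -∑ ω ∈ (T ∪ Δ)ᶜ, h ω * (∑ i : Idx Δ, rΔ i *
            ((Pmat A T Δ lam * (colsub A Δ)ᵀ * Mmat A T lam).mulVec (fun k => A k ω)) i) := by
      rw [show ∑ i : Idx Δ, rΔ i * hΔ i = ∑ i : Idx Δ, rΔ i *
          (-∑ ω ∈ (T ∪ Δ)ᶜ, h ω *
            ((Pmat A T Δ lam * (colsub A Δ)ᵀ * Mmat A T lam).mulVec (fun k => A k ω)) i) from
        Finset.sum_congr rfl fun i _ => by rw [hhd i]]
      simp only [mul_neg, Finset.sum_neg_distrib, Finset.mul_sum]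
      congr 1
      rw [Finset.sum_comm]
      exact Finset.sum_congr rfl fun ω _ => Finset.sum_congr rfl fun i _ => by ring
    rw [h1]
    have h2 : ∀ ω ∈ (T ∪ Δ)ᶜ, |∑ i : Idx Δ, rΔ i *
        ((Pmat A T Δ lam * (colsub A Δ)ᵀ * Mmat A T lam).mulVec (fun k => A k ω)) i|
        ≤ (1 - ERC A T Δ lam) * γ := by
      intro ω hω
      have hd := dot_bound A T Δ γ lam y d habs ω
      have hl := l1_bound A T Δ lam (ω := ω) (Finset.mem_compl.mp hω)
      have heq : ∑ i : Idx Δ, rΔ i *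
          ((Pmat A T Δ lam * (colsub A Δ)ᵀ * Mmat A T lam).mulVec (fun k => A k ω)) i
          = ((Pmat A T Δ lam * (colsub A Δ)ᵀ * Mmat A T lam).mulVec (fun k => A k ω)) ⬝ᵥ
              (fun j : Idx Δ => ∑ k, A k j.1 * (y k - A.mulVec d k)) := by
        simp only [dotProduct]
        exact Finset.sum_congr rfl fun i _ => by rw [hrΔ, hr]; ring
      rw [heq]
      calc |((Pmat A T Δ lam * (colsub A Δ)ᵀ * Mmat A T lam).mulVec (fun k => A k ω)) ⬝ᵥ
              (fun j : Idx Δ => ∑ k, A k j.1 * (y k - A.mulVec d k))|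
          ≤ l1 ((Pmat A T Δ lam * (colsub A Δ)ᵀ * Mmat A T lam).mulVec (fun k => A k ω)) * γ :=
            hd
        _ ≤ (1 - ERC A T Δ lam) * γ := mul_le_mul_of_nonneg_right hl hγ.le
    calc -∑ ω ∈ (T ∪ Δ)ᶜ, h ω * (∑ i : Idx Δ, rΔ i *
          ((Pmat A T Δ lam * (colsub A Δ)ᵀ * Mmat A T lam).mulVec (fun k => A k ω)) i)
        ≥ -∑ ω ∈ (T ∪ Δ)ᶜ, |h ω| * ((1 - ERC A T Δ lam) * γ) := by
          apply neg_le_neg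
          apply Finset.sum_le_sum
          intro ω hω
          calc h ω * _ ≤ |h ω * _| := le_abs_self _
            _ = |h ω| * |_| := abs_mul _ _
            _ ≤ |h ω| * ((1 - ERC A T Δ lam) * γ) :=
                mul_le_mul_of_nonneg_left (h2 ω hω) (abs_nonneg _)
      _ = -((1 - ERC A T Δ lam) * γ * ∑ ω ∈ (T ∪ Δ)ᶜ, |h ω|) := by
          rw [Finset.mul_sum]
          congr 1
          exact Finset.sum_congr rfl fun ω _ => by ring
  -- ℓ1 bookkeeping
  have hoffb : ∀ ω ∈ (T ∪ Δ)ᶜ, h ω = b ω := by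
    intro ω hω
    simp only [hh]
    rw [hd0 ω (Finset.mem_compl.mp hω), sub_zero]
  have hl1' : ∑ i ∈ Δ, |b i| - ∑ i ∈ Δ, |d i| = -∑ ω ∈ (T ∪ Δ)ᶜ, |b ω| := by
    have h1 := sum_Tc T Δ hTΔ (fun i => |b i|)
    have h2 := sum_Tc T Δ hTΔ (fun i => |d i|)
    have h3 : ∑ ω ∈ (T ∪ Δ)ᶜ, |d ω| = 0 :=
      Finset.sum_eq_zero fun ω hω => by rw [hd0 ω (Finset.mem_compl.mp hω), abs_zero]
    rw [h1, h2, h3] at hl1eq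
    linarith
  have hXfin : -(γ * ∑ ω ∈ (T ∪ Δ)ᶜ, |b ω|)
      ≥ -((1 - ERC A T Δ lam) * γ * ∑ ω ∈ (T ∪ Δ)ᶜ, |b ω|) := by
    have e1 : X = -(γ * ∑ ω ∈ (T ∪ Δ)ᶜ, |b ω|) := by rw [hXa, hl1']; ring
    have e2 : ∑ ω ∈ (T ∪ Δ)ᶜ, |h ω| = ∑ ω ∈ (T ∪ Δ)ᶜ, |b ω| :=
      Finset.sum_congr rfl fun ω hω => by rw [hoffb ω hω]
    rw [← e1, ← e2]
    exact hXb
  have hsums : ∑ ω ∈ (T ∪ Δ)ᶜ, |b ω| = 0 := by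
    have hnn : 0 ≤ ∑ ω ∈ (T ∪ Δ)ᶜ, |b ω| :=
      Finset.sum_nonneg fun ω _ => abs_nonneg _
    nlinarith [hXfin, mul_pos hγ hERC]
  intro ω hω
  have := (Finset.sum_eq_zero_iff_of_nonneg (fun ω _ => abs_nonneg (b ω))).mp hsums ω
    (Finset.mem_compl.mpr hω)
  exact abs_eq_zero.mp this

end Uniq

/-- If `Q_{T,λ}(Δ)` is invertible, `ERC_{T,λ}(Δ) > 0` and
`γ ≥ ‖A_{(T∪Δ)^c}'(y − Ac(Δ))‖_∞ / ERC`, then `L` has a unique global minimizer,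
equal to the minimizer `d(Δ)` over vectors supported on `T ∪ Δ`. -/
theorem stmt8 {n m : ℕ} (A : Matrix (Fin n) (Fin m) ℝ) (T Δ : Finset (Fin m))
    (hTΔ : Disjoint T Δ) (γ lam : ℝ) (hγ : 0 < γ) (hlam : 0 ≤ lam)
    (y : Fin n → ℝ) (μ : Fin m → ℝ)
    (hQ : IsUnit (Qmat A T Δ lam)) (hERC : 0 < ERC A T Δ lam)
    (hγge : γ ≥ gammaNum A T Δ lam y μ / ERC A T Δ lam)
    (d : Fin m → ℝ)
    (hd0 : ∀ i ∉ T ∪ Δ, d i = 0)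
    (hdmin : ∀ b : Fin m → ℝ, (∀ i ∉ T ∪ Δ, b i = 0) →
      Lobj A T γ lam y μ d ≤ Lobj A T γ lam y μ b) :
    (∀ b : Fin m → ℝ, Lobj A T γ lam y μ d ≤ Lobj A T γ lam y μ b) ∧
    (∀ b : Fin m → ℝ,
      (∀ b' : Fin m → ℝ, Lobj A T γ lam y μ b ≤ Lobj A T γ lam y μ b') → b = d) := by
  classical
  have hQd : IsUnit (Qmat A T Δ lam).det := (Matrix.isUnit_iff_isUnit_det _).mp hQ
  have hstatT := stat_T A T Δ γ lam y μ d hγ hlam hd0 hdmin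
  have habsΔ := stat_D_abs A T Δ γ lam y μ d hTΔ hγ hd0 hdmin
  have halignΔ := stat_D_align A T Δ γ lam y μ d hTΔ hγ hd0 hdmin
  have hoffabs := r_off_bound A T Δ γ lam y μ d hTΔ hγ hlam hQ hERC hγge hd0 hstatT habsΔ
  have habsTc : ∀ i ∈ Tᶜ, |∑ k, A k i * (y k - A.mulVec d k)| ≤ γ := by
    intro i hi
    by_cases hiΔ : i ∈ Δ
    · exact habsΔ i hiΔ
    · refine hoffabs i fun hiU => ?_
      rcases Finset.mem_union.mp hiU with h | h
      · exact (Finset.mem_compl.mp hi) h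
      · exact hiΔ h
  have halignTc : ∀ i ∈ Tᶜ, (∑ k, A k i * (y k - A.mulVec d k)) * d i = γ * |d i| := by
    intro i hi
    by_cases hiΔ : i ∈ Δ
    · exact halignΔ i hiΔ
    · have hiU : i ∉ T ∪ Δ := fun hiU => by
        rcases Finset.mem_union.mp hiU with h | h
        · exact (Finset.mem_compl.mp hi) h
        · exact hiΔ h
      rw [hd0 i hiU]
      simp
  have part1 : ∀ b : Fin m → ℝ, Lobj A T γ lam y μ d ≤ Lobj A T γ lam y μ b :=
    lobj_ge A T γ lam hlam y μ d hstatT halignTc habsTc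
  refine ⟨part1, ?_⟩
  intro b hb
  have hLeq : Lobj A T γ lam y μ b = Lobj A T γ lam y μ d :=
    le_antisymm (hb d) (part1 b)
  have hmaster := lobj_master A T γ lam y μ d hstatT halignTc b
  rw [hLeq] at hmaster
  -- the three nonnegative pieces are all zero
  set S1 := ∑ i ∈ Tᶜ, (γ * |b i| - (∑ k, A k i * (y k - A.mulVec d k)) * b i) with hS1
  set S2 := ∑ k, (A.mulVec (fun j => b j - d j) k) ^ 2 with hS2
  set S3 := ∑ i ∈ T, (b i - d i) ^ 2 with hS3
  have hS1nn' : ∀ i ∈ Tᶜ,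
      0 ≤ γ * |b i| - (∑ k, A k i * (y k - A.mulVec d k)) * b i := by
    intro i hi
    have h1 : (∑ k, A k i * (y k - A.mulVec d k)) * b i ≤ γ * |b i| := by
      calc (∑ k, A k i * (y k - A.mulVec d k)) * b i
          ≤ |(∑ k, A k i * (y k - A.mulVec d k)) * b i| := le_abs_self _
        _ = |∑ k, A k i * (y k - A.mulVec d k)| * |b i| := abs_mul _ _
        _ ≤ γ * |b i| := mul_le_mul_of_nonneg_right (habsTc i hi) (abs_nonneg _)
    linarith
  have hS1nn : 0 ≤ S1 := Finset.sum_nonneg hS1nn'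
  have hS2nn : 0 ≤ S2 := Finset.sum_nonneg fun k _ => sq_nonneg _
  have hS3nn : 0 ≤ S3 := Finset.sum_nonneg fun i _ => sq_nonneg _
  have hzero : S1 = 0 ∧ S2 = 0 ∧ lam * S3 = 0 := by
    constructor
    · nlinarith [hmaster, mul_nonneg hlam hS3nn]
    constructor
    · nlinarith [hmaster, mul_nonneg hlam hS3nn]
    · nlinarith [hmaster, mul_nonneg hlam hS3nn]
  have hsign : ∀ i ∈ Tᶜ, γ * |b i| = (∑ k, A k i * (y k - A.mulVec d k)) * b i := by
    intro i hi
    have := (Finset.sum_eq_zero_iff_of_nonneg hS1nn').mp hzero.1 i hi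
    linarith
  have hAbAd : A.mulVec b = A.mulVec d := by
    funext k
    have hek := (Finset.sum_eq_zero_iff_of_nonneg
      (fun k (_ : k ∈ Finset.univ) => sq_nonneg (A.mulVec (fun j => b j - d j) k))).mp
      hzero.2.1 k (Finset.mem_univ k)
    have he : A.mulVec (fun j => b j - d j) k = 0 := pow_eq_zero_iff two_ne_zero |>.mp hek
    have hsplit : A.mulVec (fun j => b j - d j) k = A.mulVec b k - A.mulVec d k := by
      simp only [Matrix.mulVec, dotProduct, ← Finset.sum_sub_distrib]
      exact Finset.sum_congr rfl fun j _ => by ring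
    rw [hsplit] at he
    linarith
  have hlamb : ∀ i ∈ T, lam * (b i - d i) = 0 := by
    intro i hi
    rcases mul_eq_zero.mp hzero.2.2 with h | h
    · rw [h, zero_mul]
    · have := (Finset.sum_eq_zero_iff_of_nonneg
        (fun i (_ : i ∈ T) => sq_nonneg (b i - d i))).mp h i hi
      rw [pow_eq_zero_iff two_ne_zero |>.mp this, mul_zero]
  have hl1eq : ∑ i ∈ Tᶜ, |b i| = ∑ i ∈ Tᶜ, |d i| := by
    have hq : ∑ k, (y k - A.mulVec b k) ^ 2 = ∑ k, (y k - A.mulVec d k) ^ 2 := by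
      rw [hAbAd]
    have hT : (lam/2) * ∑ i ∈ T, (b i - μ i) ^ 2
        = (lam/2) * ∑ i ∈ T, (d i - μ i) ^ 2 := by
      rw [Finset.mul_sum, Finset.mul_sum]
      refine Finset.sum_congr rfl fun i hi => ?_
      have hli := hlamb i hi
      linear_combination ((b i + d i - 2 * μ i) / 2) * hli
    have := hLeq
    simp only [Lobj] at this
    rw [hq, hT] at this
    have hγne : γ ≠ 0 := ne_of_gt hγ
    field_simp at this
    have h2 : γ * (∑ i ∈ Tᶜ, |b i| - ∑ i ∈ Tᶜ, |d i|) = 0 := by linarith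
    rcases mul_eq_zero.mp h2 with h | h
    · exact absurd h hγne
    · linarith
  have hboff := uniq_off A T Δ γ lam y d hTΔ hγ hlam hQ hERC hd0 habsΔ halignΔ b
    hAbAd hlamb hsign hl1eq
  -- conclude b = d on the support as well
  set bS : Idx (T ∪ Δ) → ℝ := fun j => b j.1 with hbS
  set dS : Idx (T ∪ Δ) → ℝ := fun j => d j.1 with hdS
  have hQbd : (Qmat A T Δ lam).mulVec (bS - dS) = 0 := by
    funext j
    rw [Q_mulVec_apply]
    have hASbd : (colsub A (T ∪ Δ)).mulVec (bS - dS) = 0 := by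
      rw [Matrix.mulVec_sub]
      have h1 : (colsub A (T ∪ Δ)).mulVec bS = A.mulVec b :=
        (mulVec_support A (T ∪ Δ) b hboff).symm
      have h2 : (colsub A (T ∪ Δ)).mulVec dS = A.mulVec d :=
        (mulVec_support A (T ∪ Δ) d hd0).symm
      rw [h1, h2, hAbAd, sub_self]
    rw [hASbd]
    simp only [Pi.zero_apply, mul_zero, Finset.sum_const_zero, zero_add]
    by_cases hTj : j.1 ∈ T
    · rw [if_pos hTj]
      have : (bS - dS) j = b j.1 - d j.1 := rfl
      rw [this]
      exact hlamb j.1 hTj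
    · rw [if_neg hTj]
      simp
  have hbd := Q_inj A T Δ lam hQd _ hQbd
  funext i
  by_cases hi : i ∈ T ∪ Δ
  · have := congrFun hbd ⟨i, hi⟩
    simp only [Pi.sub_apply, Pi.zero_apply] at this
    have : bS ⟨i, hi⟩ - dS ⟨i, hi⟩ = 0 := this
    simp only [hbS, hdS] at this
    linarith [this]
  · rw [hboff i hi, hd0 i hi]
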